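/- In the repeated solicitation model with Poisson(v) prior, the expected total marketing effort satisfies E[M] = v·E[H(T)], where H(k) = E[min(U_1, k)] and M = Σ_s (U_s 1{U_s < T} + T 1{U_s > T}). -/

import Mathlib

open MeasureTheory ProbabilityTheory
open scoped ENNReal NNReal

namespace MarketingAux

/-- First value `n ≥ 1` not attained by the tuple `u`. -/
noncomputable def TT {r : ℕ} (u : Fin r → ℕ) : ℕ := sInf {n | 1 ≤ n ∧ ∀ i, u i ≠ n}

lemma TTset_nonempty {r : ℕ} (u : Fin r → ℕ) : {n | 1 ≤ n ∧ ∀ i, u i ≠ n}.Nonempty := by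
  refine ⟨(∑ i, u i) + 1, Nat.le_add_left _ _, fun i h => ?_⟩
  have : u i ≤ ∑ j, u j := Finset.single_le_sum (fun j _ => Nat.zero_le _) (Finset.mem_univ i)
  omega

lemma TT_spec {r : ℕ} (u : Fin r → ℕ) : 1 ≤ TT u ∧ ∀ i, u i ≠ TT u :=
  Nat.sInf_mem (TTset_nonempty u)

lemma one_le_TT {r : ℕ} (u : Fin r → ℕ) : 1 ≤ TT u := (TT_spec u).1

lemma ne_TT {r : ℕ} (u : Fin r → ℕ) (i : Fin r) : u i ≠ TT u := (TT_spec u).2 i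

lemma TT_comp {r : ℕ} (u : Fin r → ℕ) (σ : Equiv.Perm (Fin r)) : TT (u ∘ σ) = TT u := by
  unfold TT
  congr 1
  ext n
  simp only [Set.mem_setOf_eq, Function.comp]
  refine and_congr_right fun _ => ⟨fun h i => ?_, fun h i => h _⟩
  simpa using h (σ.symm i)

lemma TT_cons_set (a : ℕ) {m : ℕ} (w : Fin m → ℕ) :
    {n | 1 ≤ n ∧ ∀ i, Fin.cons a w i ≠ n} = {n | 1 ≤ n ∧ a ≠ n ∧ ∀ i, w i ≠ n} := by
  ext n
  simp only [Set.mem_setOf_eq, Fin.forall_fin_succ, Fin.cons_zero, Fin.cons_succ, and_assoc]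

lemma TT_cons_ne {a : ℕ} {m : ℕ} (w : Fin m → ℕ) (h : a ≠ TT w) :
    TT (Fin.cons a w) = TT w := by
  have hmem' : TT w ∈ {n | 1 ≤ n ∧ a ≠ n ∧ ∀ i, w i ≠ n} :=
    ⟨one_le_TT w, h, fun i => ne_TT w i⟩
  have hsub : {n | 1 ≤ n ∧ a ≠ n ∧ ∀ i, w i ≠ n} ⊆ {n | 1 ≤ n ∧ ∀ i, w i ≠ n} :=
    fun n hn => ⟨hn.1, hn.2.2⟩
  unfold TT
  rw [TT_cons_set]
  refine le_antisymm (Nat.sInf_le hmem') (Nat.sInf_le (hsub (Nat.sInf_mem ⟨TT w, hmem'⟩)))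

lemma TT_lt_cons_self {m : ℕ} (w : Fin m → ℕ) : TT w < TT (Fin.cons (TT w) w) := by
  have hmem : TT (Fin.cons (TT w) w) ∈ {n | 1 ≤ n ∧ TT w ≠ n ∧ ∀ i, w i ≠ n} := by
    rw [← TT_cons_set]
    exact Nat.sInf_mem (TTset_nonempty _)
  have hle : TT w ≤ TT (Fin.cons (TT w) w) := Nat.sInf_le ⟨hmem.1, hmem.2.2⟩
  exact lt_of_le_of_ne hle hmem.2.1

/-- The per-client effort. -/
def ffun (a t : ℕ) : ℕ := if 1 ≤ a ∧ a < t then a else t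

lemma ffun_cons (a : ℕ) {m : ℕ} (w : Fin m → ℕ) :
    ffun a (TT (Fin.cons a w)) = if a = 0 then TT w else min a (TT w) := by
  rcases eq_or_ne a 0 with rfl | ha
  · rw [TT_cons_ne w (by have := one_le_TT w; omega)]
    simp [ffun]
  · rcases eq_or_ne a (TT w) with rfl | hne
    · have h := TT_lt_cons_self w
      rw [ffun, if_pos ⟨one_le_TT w, h⟩, if_neg ha, min_self]
    · rw [TT_cons_ne w hne, if_neg ha, ffun]
      rcases lt_or_gt_of_ne hne with hlt | hgt
      · rw [if_pos ⟨Nat.one_le_iff_ne_zero.mpr ha, hlt⟩, min_eq_left hlt.le]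
      · rw [if_neg (by omega), min_eq_right hgt.le]

/-- The ENNReal version of `H`. -/
noncomputable def hhE (p : ℕ → ℝ≥0∞) (k : ℕ) : ℝ≥0∞ :=
  (∑ n ∈ Finset.Icc 1 k, (n : ℝ≥0∞) * p n) + (k : ℝ≥0∞) * (1 - ∑ n ∈ Finset.Icc 1 k, p n)

lemma Icc_sum_eq_range {M : Type*} [AddCommMonoid M] (f : ℕ → M) (k : ℕ) :
    ∑ n ∈ Finset.Icc 1 k, f n = ∑ i ∈ Finset.range k, f (i + 1) := by
  rw [← Finset.Ico_add_one_right_eq_Icc, Finset.sum_Ico_eq_sum_range]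
  simp [add_comm]

lemma key_sum (p : ℕ → ℝ≥0∞) (hp : ∑' a, p a = 1) (k : ℕ) :
    ∑' a : ℕ, p a * (((if a = 0 then k else min a k : ℕ) : ℝ≥0∞)) = hhE p k := by
  have hrne : (∑ i ∈ Finset.range k, p (i + 1)) ≠ ∞ := by
    have h1 : (∑ i ∈ Finset.range k, p (i + 1)) ≤ 1 := by
      rw [← Icc_sum_eq_range p k]
      exact hp ▸ ENNReal.sum_le_tsum _
    exact (h1.trans_lt ENNReal.one_lt_top).ne
  have hone : (1 : ℝ≥0∞) - (∑ n ∈ Finset.Icc 1 k, p n)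
      = p 0 + ∑' i : ℕ, p (i + k + 1) := by
    have hpsum : p 0 + ((∑ i ∈ Finset.range k, p (i + 1)) + ∑' i : ℕ, p (i + k + 1)) = 1 := by
      rw [Summable.sum_add_tsum_nat_add' (f := fun n => p (n + 1)) (k := k) ENNReal.summable,
        ← tsum_eq_zero_add' ENNReal.summable]
      exact hp
    have h2 : (p 0 + ∑' i : ℕ, p (i + k + 1)) + ∑ i ∈ Finset.range k, p (i + 1) = 1 := by
      rw [← hpsum]; ring
    rw [Icc_sum_eq_range p k, ← h2, ENNReal.add_sub_cancel_right hrne]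
  -- split lhs
  rw [tsum_eq_zero_add' ENNReal.summable]
  have h0 : p 0 * (((if (0:ℕ) = 0 then k else min 0 k : ℕ) : ℝ≥0∞)) = p 0 * k := by simp
  have hsplit : ∑' n : ℕ, p (n + 1) * (((if n + 1 = 0 then k else min (n+1) k : ℕ) : ℝ≥0∞))
      = ∑' n : ℕ, p (n + 1) * ((min (n+1) k : ℕ) : ℝ≥0∞) :=
    tsum_congr fun n => by simp
  rw [h0, hsplit]
  rw [← Summable.sum_add_tsum_nat_add' (f := fun n => p (n + 1) * ((min (n+1) k : ℕ) : ℝ≥0∞)) (k := k)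
    ENNReal.summable]
  have h1 : ∀ i ∈ Finset.range k, p (i + 1) * ((min (i+1) k : ℕ) : ℝ≥0∞)
      = ((i + 1 : ℕ) : ℝ≥0∞) * p (i + 1) := by
    intro i hi
    rw [Nat.min_eq_left (Finset.mem_range.mp hi)]
    exact mul_comm _ _
  have h2 : ∀ i : ℕ, p (i + k + 1) * ((min (i + k + 1) k : ℕ) : ℝ≥0∞) = p (i + k + 1) * k := by
    intro i
    rw [Nat.min_eq_right (by omega : k ≤ i + k + 1)]
  rw [Finset.sum_congr rfl h1, tsum_congr h2, ENNReal.tsum_mul_right]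
  rw [hhE, hone, Icc_sum_eq_range (fun n => (n : ℝ≥0∞) * p n) k]
  ring

/-- the discrete Mecke/symmetry identity. -/
theorem mecke (p : ℕ → ℝ≥0∞) (hp : ∑' a, p a = 1) (Q : ℕ → ℝ≥0∞) (c : ℝ≥0∞)
    (hQ : ∀ m : ℕ, Q (m + 1) * ((m + 1 : ℕ) : ℝ≥0∞) = c * Q m) :
    ∑' e : (r : ℕ) × (Fin r → ℕ),
        (∑ i, ((ffun (e.2 i) (TT e.2) : ℕ) : ℝ≥0∞)) * (Q e.1 * ∏ i, p (e.2 i))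
      = c * ∑' e : (r : ℕ) × (Fin r → ℕ), hhE p (TT e.2) * (Q e.1 * ∏ i, p (e.2 i)) := by
  classical
  -- inner sums
  set B : (r : ℕ) → ℝ≥0∞ :=
    fun r => ∑' w : Fin r → ℕ, (∏ i, p (w i)) * hhE p (TT w) with hB
  -- step 1 : symmetry
  have step1 : ∀ (m : ℕ) (i : Fin (m + 1)),
      (∑' u : Fin (m + 1) → ℕ, (∏ j, p (u j)) * ((ffun (u i) (TT u) : ℕ) : ℝ≥0∞))
        = ∑' u : Fin (m + 1) → ℕ, (∏ j, p (u j)) * ((ffun (u 0) (TT u) : ℕ) : ℝ≥0∞) := by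
    intro m i
    have key := Equiv.tsum_eq ((Equiv.swap (0 : Fin (m+1)) i).arrowCongr (Equiv.refl ℕ))
      (fun u : Fin (m+1) → ℕ => (∏ j, p (u j)) * ((ffun (u 0) (TT u) : ℕ) : ℝ≥0∞))
    rw [← key]
    refine tsum_congr fun u => ?_
    have harr : ((Equiv.swap (0 : Fin (m+1)) i).arrowCongr (Equiv.refl ℕ)) u
        = u ∘ (Equiv.swap (0 : Fin (m+1)) i) := by
      funext j
      simp [Equiv.arrowCongr]
    rw [harr]
    have h0 : (u ∘ (Equiv.swap (0 : Fin (m+1)) i)) 0 = u i := by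
      simp [Equiv.swap_apply_left]
    rw [h0, TT_comp u (Equiv.swap 0 i)]
    congr 1
    exact (Equiv.prod_comp (Equiv.swap (0 : Fin (m+1)) i) (fun j => p (u j))).symm
  -- step 2 : peel off the first coordinate
  have step2 : ∀ m : ℕ,
      (∑' u : Fin (m + 1) → ℕ, (∏ j, p (u j)) * ((ffun (u 0) (TT u) : ℕ) : ℝ≥0∞)) = B m := by
    intro m
    have hterm : ∀ (a : ℕ) (w : Fin m → ℕ),
        (∏ j, p ((Fin.cons a w : Fin (m+1) → ℕ) j)) * ((ffun ((Fin.cons a w : Fin (m+1) → ℕ) 0) (TT ((Fin.cons a w : Fin (m+1) → ℕ))) : ℕ) : ℝ≥0∞)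
          = (∏ j, p (w j)) *
              (p a * (((if a = 0 then TT w else min a (TT w) : ℕ)) : ℝ≥0∞)) := by
      intro a w
      have hfun : (fun j => p ((Fin.cons a w : Fin (m+1) → ℕ) j)) = Fin.cons (p a) (fun j' => p (w j')) := by
        funext j
        refine Fin.cases ?_ ?_ j
        · rfl
        · intro j'; rfl
      have hprod : (∏ j, p ((Fin.cons a w : Fin (m+1) → ℕ) j)) = p a * ∏ j, p (w j) := by
        calc (∏ j, p ((Fin.cons a w : Fin (m+1) → ℕ) j))
            = ∏ j, Fin.cons (p a) (fun j' => p (w j')) j :=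
              Finset.prod_congr rfl fun j _ => congrFun hfun j
          _ = p a * ∏ j, p (w j) := Fin.prod_cons _ _
      rw [Fin.cons_zero, ffun_cons, hprod]
      ring
    calc (∑' u : Fin (m + 1) → ℕ, (∏ j, p (u j)) * ((ffun (u 0) (TT u) : ℕ) : ℝ≥0∞))
        = ∑' x : ℕ × (Fin m → ℕ), (∏ j, p ((Fin.cons x.1 x.2 : Fin (m+1) → ℕ) j))
            * ((ffun ((Fin.cons x.1 x.2 : Fin (m+1) → ℕ) 0) (TT ((Fin.cons x.1 x.2 : Fin (m+1) → ℕ))) : ℕ) : ℝ≥0∞) :=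
          (Equiv.tsum_eq (Fin.consEquiv (fun _ : Fin (m+1) => ℕ)) _).symm
      _ = ∑' x : ℕ × (Fin m → ℕ), (∏ j, p (x.2 j)) *
            (p x.1 * (((if x.1 = 0 then TT x.2 else min x.1 (TT x.2) : ℕ)) : ℝ≥0∞)) :=
          tsum_congr fun x => hterm x.1 x.2
      _ = ∑' a : ℕ, ∑' w : Fin m → ℕ, (∏ j, p (w j)) *
            (p a * (((if a = 0 then TT w else min a (TT w) : ℕ)) : ℝ≥0∞)) :=
          ENNReal.tsum_prod'
      _ = ∑' w : Fin m → ℕ, ∑' a : ℕ, (∏ j, p (w j)) *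
            (p a * (((if a = 0 then TT w else min a (TT w) : ℕ)) : ℝ≥0∞)) :=
          ENNReal.tsum_comm
      _ = ∑' w : Fin m → ℕ, (∏ j, p (w j)) * ∑' a : ℕ,
            p a * (((if a = 0 then TT w else min a (TT w) : ℕ)) : ℝ≥0∞) :=
          tsum_congr fun w => ENNReal.tsum_mul_left
      _ = B m := by
          rw [hB]
          exact tsum_congr fun w => by rw [key_sum p hp (TT w)]
  -- assemble LHS
  rw [ENNReal.tsum_sigma' (f := fun e : (r : ℕ) × (Fin r → ℕ) =>
    (∑ i, ((ffun (e.2 i) (TT e.2) : ℕ) : ℝ≥0∞)) * (Q e.1 * ∏ i, p (e.2 i)))]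
  rw [ENNReal.tsum_sigma' (f := fun e : (r : ℕ) × (Fin r → ℕ) =>
    hhE p (TT e.2) * (Q e.1 * ∏ i, p (e.2 i)))]
  have hRHS : ∀ r : ℕ,
      (∑' u : Fin r → ℕ, hhE p (TT u) * (Q r * ∏ i, p (u i))) = Q r * B r := by
    intro r
    rw [hB, ← ENNReal.tsum_mul_left]
    exact tsum_congr fun u => by ring
  have hLHS : ∀ m : ℕ,
      (∑' u : Fin (m+1) → ℕ,
          (∑ i, ((ffun (u i) (TT u) : ℕ) : ℝ≥0∞)) * (Q (m+1) * ∏ i, p (u i)))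
        = (c * Q m) * B m := by
    intro m
    have h1 : ∀ u : Fin (m+1) → ℕ,
        (∑ i, ((ffun (u i) (TT u) : ℕ) : ℝ≥0∞)) * (Q (m+1) * ∏ i, p (u i))
          = Q (m+1) * ∑ i, (∏ j, p (u j)) * ((ffun (u i) (TT u) : ℕ) : ℝ≥0∞) := by
      intro u
      rw [Finset.mul_sum, Finset.sum_mul]
      exact Finset.sum_congr rfl fun i _ => by ring
    rw [tsum_congr h1, ENNReal.tsum_mul_left]
    rw [Summable.tsum_finsetSum (fun i _ => ENNReal.summable)]
    have h2 : ∀ i ∈ (Finset.univ : Finset (Fin (m+1))),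
        (∑' u : Fin (m+1) → ℕ, (∏ j, p (u j)) * ((ffun (u i) (TT u) : ℕ) : ℝ≥0∞))
          = B m := fun i _ => (step1 m i).trans (step2 m)
    rw [Finset.sum_congr rfl h2, Finset.sum_const, Finset.card_univ, Fintype.card_fin,
      nsmul_eq_mul]
    rw [← mul_assoc, ← hQ m]
  calc ∑' r, ∑' u : Fin r → ℕ,
        (∑ i, ((ffun (u i) (TT u) : ℕ) : ℝ≥0∞)) * (Q r * ∏ i, p (u i))
      = (∑' u : Fin 0 → ℕ,
          (∑ i, ((ffun (u i) (TT u) : ℕ) : ℝ≥0∞)) * (Q 0 * ∏ i, p (u i)))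
        + ∑' m, ∑' u : Fin (m+1) → ℕ,
          (∑ i, ((ffun (u i) (TT u) : ℕ) : ℝ≥0∞)) * (Q (m+1) * ∏ i, p (u i)) :=
        tsum_eq_zero_add' ENNReal.summable
    _ = ∑' m, (c * Q m) * B m := by
        rw [tsum_congr hLHS]
        simp
    _ = c * ∑' m, Q m * B m := by
        rw [← ENNReal.tsum_mul_left]
        exact tsum_congr fun m => by ring
    _ = c * ∑' r, ∑' u : Fin r → ℕ, hhE p (TT u) * (Q r * ∏ i, p (u i)) := by
        rw [tsum_congr hRHS]

end MarketingAux

open MarketingAux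

/-- **Expected total marketing effort.** In the repeated solicitation model the number of
clients `S₀ ~ Poisson(v)`; client response times `U s` (with value `0` encoding "never
responds", i.e. `∞`) are i.i.d. with `P(U s = n) = π n` for `n ≥ 1`, independent of `S₀`;
`X n = #{s < S₀ : U s = n}`; `T = min {n ≥ 1 : X n = 0}` (a.s. finite);
`M = ∑_{s < S₀} (U s · 1{U s < T} + T · 1{U s > T})` is the total marketing effort.
Then `E[M] = v · E[H(T)]` where `H k = E[U₁ ∧ k] = ∑_{n=1}^k n π n + k (1 - ∑_{n=1}^k π n)`. -/
theorem expected_total_marketing_effort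
    {Ω : Type*} [MeasurableSpace Ω] (μ : Measure Ω) [IsProbabilityMeasure μ]
    (π : ℕ → ℝ) (hπ : ∀ n, 1 ≤ n → 0 ≤ π n) (hπsum : ∑' n : ℕ, π (n + 1) ≤ 1)
    (v : ℝ) (hv : 0 < v)
    (S0 : Ω → ℕ) (U : ℕ → Ω → ℕ)
    (hS0m : Measurable S0) (hUm : ∀ s, Measurable (U s))
    (hindep : iIndepFun
      (fun o : Option ℕ => o.elim S0 U) μ)
    (hS0 : ∀ r : ℕ, μ {ω | S0 ω = r}
        = ENNReal.ofReal (Real.exp (-v) * v ^ r / r.factorial))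
    (hU : ∀ s, ∀ n, 1 ≤ n → μ {ω | U s ω = n} = ENNReal.ofReal (π n))
    (X : ℕ → Ω → ℕ)
    (hX : ∀ n ω, X n ω = ((Finset.range (S0 ω)).filter (fun s => U s ω = n)).card)
    (T : Ω → ℕ) (hT : ∀ ω, T ω = sInf {n | 1 ≤ n ∧ X n ω = 0})
    (hTfin : ∀ᵐ ω ∂μ, ∃ n, 1 ≤ n ∧ X n ω = 0)
    (M : Ω → ℕ)
    (hM : ∀ ω, M ω = ∑ s ∈ Finset.range (S0 ω),
        (if 1 ≤ U s ω ∧ U s ω < T ω then U s ω else T ω))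
    (H : ℕ → ℝ)
    (hH : ∀ k, H k = (∑ n ∈ Finset.Icc 1 k, (n : ℝ) * π n)
        + (k : ℝ) * (1 - ∑ n ∈ Finset.Icc 1 k, π n)) :
    ∫⁻ ω, (M ω : ℝ≥0∞) ∂μ
      = ENNReal.ofReal v * ∫⁻ ω, ENNReal.ofReal (H (T ω)) ∂μ := by
  classical
  -- the single-client distribution, with `p 0` the probability of never responding
  set P : ℝ≥0∞ := ∑' n : ℕ, ENNReal.ofReal (π (n + 1)) with hP
  set p : ℕ → ℝ≥0∞ := fun a => if a = 0 then 1 - P else ENNReal.ofReal (π a) with hp_def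
  have hUnion : ∀ s : ℕ, ∑' a : ℕ, μ {ω | U s ω = a} = 1 := by
    intro s
    have hdisj : Pairwise (Function.onFun Disjoint fun a : ℕ => {ω | U s ω = a}) := by
      intro a b hab
      simp only [Function.onFun, Set.disjoint_left]
      rintro ω (h1 : U s ω = a) (h2 : U s ω = b)
      exact hab (h1 ▸ h2 ▸ rfl)
    have hmeas : ∀ a : ℕ, MeasurableSet {ω | U s ω = a} :=
      fun a => hUm s (measurableSet_singleton a)
    rw [← measure_iUnion hdisj hmeas]
    have : (⋃ a : ℕ, {ω | U s ω = a}) = Set.univ := by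
      ext ω; simp [Set.mem_iUnion]
    rw [this, measure_univ]
  have hshift : ∀ s : ℕ, ∑' n : ℕ, μ {ω | U s ω = n + 1} = P := by
    intro s
    rw [hP]
    exact tsum_congr fun n => hU s (n + 1) (Nat.succ_le_succ (Nat.zero_le n))
  have hPle : P ≤ 1 := by
    have h0 := hUnion 0
    rw [tsum_eq_zero_add' ENNReal.summable, hshift 0] at h0
    calc P ≤ μ {ω | U 0 ω = 0} + P := le_add_self
      _ = 1 := h0
  have hPne : P ≠ ∞ := (hPle.trans_lt ENNReal.one_lt_top).ne
  have hpU : ∀ s a, μ {ω | U s ω = a} = p a := by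
    intro s a
    cases a with
    | zero =>
      have h0 := hUnion s
      rw [tsum_eq_zero_add' ENNReal.summable, hshift s] at h0
      simp only [hp_def, if_pos rfl]
      exact ENNReal.eq_sub_of_add_eq hPne h0
    | succ n =>
      simp only [hp_def, if_neg (Nat.succ_ne_zero n)]
      exact hU s (n + 1) (Nat.succ_le_succ (Nat.zero_le n))
  have hp : ∑' a, p a = 1 := by
    rw [tsum_eq_zero_add' ENNReal.summable]
    have h1 : p 0 = 1 - P := by simp [hp_def]
    have h2 : ∑' n : ℕ, p (n + 1) = P := by
      rw [hP]
      exact tsum_congr fun n => by simp [hp_def]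
    rw [h1, h2, tsub_add_cancel_of_le hPle]
  -- the Poisson weights
  set Poi : ℕ → ℝ≥0∞ := fun r => ENNReal.ofReal (Real.exp (-v) * v ^ r / r.factorial)
    with hPoi_def
  have hQ : ∀ m : ℕ, Poi (m + 1) * ((m + 1 : ℕ) : ℝ≥0∞) = ENNReal.ofReal v * Poi m := by
    intro m
    have hnn : 0 ≤ Real.exp (-v) * v ^ (m + 1) / (m + 1).factorial := by positivity
    simp only [hPoi_def]
    rw [show (((m + 1 : ℕ)) : ℝ≥0∞) = ENNReal.ofReal ((m + 1 : ℕ) : ℝ) from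
      (ENNReal.ofReal_natCast _).symm]
    rw [← ENNReal.ofReal_mul hnn, ← ENNReal.ofReal_mul hv.le]
    congr 1
    have hfac : ((m + 1).factorial : ℝ) = ((m + 1 : ℕ) : ℝ) * (m.factorial : ℝ) := by
      rw [Nat.factorial_succ]; push_cast; ring
    have hfm : (m.factorial : ℝ) ≠ 0 := Nat.cast_ne_zero.mpr (Nat.factorial_ne_zero m)
    have hfm1 : ((m + 1 : ℕ) : ℝ) ≠ 0 := Nat.cast_ne_zero.mpr (Nat.succ_ne_zero m)
    field_simp [hfac]
    rw [hfac]
    ring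
  -- atom probabilities
  have hatom : ∀ (r : ℕ) (u : Fin r → ℕ),
      μ {ω | S0 ω = r ∧ ∀ i : Fin r, U i ω = u i} = Poi r * ∏ i, p (u i) := by
    intro r u
    set val : Option ℕ → ℕ := fun o => o.elim r (fun j => if h : j < r then u ⟨j, h⟩ else 0)
      with hval_def
    set sets : Option ℕ → Set Ω := fun o => (o.elim S0 U) ⁻¹' {val o} with hsets_def
    set S : Finset (Option ℕ) := insert none ((Finset.range r).image some) with hS_def
    have hmeas : ∀ o ∈ S, MeasurableSet[MeasurableSpace.comap
        (Option.elim o S0 U) inferInstance] (sets o) := by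
      intro o _
      exact MeasurableSpace.measurableSet_comap.mpr
        ⟨{val o}, measurableSet_singleton _, rfl⟩
    have hprod := hindep.meas_biInter (S := S) (s := sets) hmeas
    have hset : (⋂ o ∈ S, sets o) = {ω | S0 ω = r ∧ ∀ i : Fin r, U i ω = u i} := by
      ext ω
      simp only [hS_def, Finset.set_biInter_insert, Set.mem_inter_iff, Set.mem_iInter,
        Finset.mem_image, Finset.mem_range, Set.mem_setOf_eq]
      constructor
      · rintro ⟨h1, h2⟩
        refine ⟨h1, fun i => ?_⟩
        have := h2 (some i) ⟨i, i.isLt, rfl⟩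
        simpa [hsets_def, hval_def, i.isLt] using this
      · rintro ⟨h1, h2⟩
        refine ⟨h1, ?_⟩
        rintro o ⟨j, hj, rfl⟩
        simpa [hsets_def, hval_def, hj] using h2 ⟨j, hj⟩
    have hnone : none ∉ (Finset.range r).image some := by simp
    rw [hset] at hprod
    rw [hprod, hS_def, Finset.prod_insert hnone,
      Finset.prod_image (fun x _ y _ h => Option.some.inj h)]
    have hμnone : μ (sets none) = Poi r := by
      have : sets none = {ω | S0 ω = r} := rfl
      rw [this, hS0 r, hPoi_def]
    have hμsome : ∀ j ∈ Finset.range r, μ (sets (some j))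
        = (fun j => if h : j < r then p (u ⟨j, h⟩) else 1) j := by
      intro j hj
      have hjr := Finset.mem_range.mp hj
      have : sets (some j) = {ω | U j ω = u ⟨j, hjr⟩} := by
        simp only [hsets_def, hval_def]
        ext ω
        simp [hjr]
      rw [this, hpU j _]
      simp [hjr]
    rw [hμnone, Finset.prod_congr rfl hμsome]
    congr 1
    rw [← Fin.prod_univ_eq_prod_range (fun j => if h : j < r then p (u ⟨j, h⟩) else 1) r]
    exact Finset.prod_congr rfl fun i _ => by simp [i.isLt]
  -- integral reduction to the countable state space
  have hred : ∀ (g : (r : ℕ) → (Fin r → ℕ) → ℝ≥0∞) (F : Ω → ℝ≥0∞),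
      (∀ ω, F ω = g (S0 ω) (fun i => U i ω)) →
      ∫⁻ ω, F ω ∂μ = ∑' e : (r : ℕ) × (Fin r → ℕ),
        g e.1 e.2 * (Poi e.1 * ∏ i, p (e.2 i)) := by
    intro g F hF
    have hmeasE : ∀ e : (r : ℕ) × (Fin r → ℕ),
        MeasurableSet {ω | S0 ω = e.1 ∧ ∀ i : Fin e.1, U i ω = e.2 i} := by
      rintro ⟨r, u⟩
      have : {ω | S0 ω = r ∧ ∀ i : Fin r, U i ω = u i}
          = (S0 ⁻¹' {r}) ∩ ⋂ i : Fin r, U i ⁻¹' {u i} := by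
        ext ω; simp [Set.mem_iInter]
      rw [this]
      exact (hS0m (measurableSet_singleton _)).inter
        (MeasurableSet.iInter fun i => hUm _ (measurableSet_singleton _))
    have hpt : ∀ ω, F ω = ∑' e : (r : ℕ) × (Fin r → ℕ),
        Set.indicator {ω' | S0 ω' = e.1 ∧ ∀ i : Fin e.1, U i ω' = e.2 i}
          (fun _ => g e.1 e.2) ω := by
      intro ω
      have hside : ∀ (e : (r : ℕ) × (Fin r → ℕ)),
          e ≠ (⟨S0 ω, fun i => U i ω⟩ : (r : ℕ) × (Fin r → ℕ)) →
          Set.indicator {ω' | S0 ω' = e.1 ∧ ∀ i : Fin e.1, U i ω' = e.2 i}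
            (fun _ => g e.1 e.2) ω = 0 := by
        rintro ⟨r, u⟩ hne
        apply Set.indicator_of_notMem
        rintro ⟨h1, h2⟩
        apply hne
        subst h1
        exact congrArg (Sigma.mk (S0 ω)) (funext fun i => (h2 i).symm)
      rw [tsum_eq_single _ hside, hF ω, Set.indicator_of_mem
        (show ω ∈ {ω' | S0 ω' = S0 ω ∧ ∀ i : Fin (S0 ω), U i ω' = U i ω}
          from ⟨rfl, fun i => rfl⟩)]
    calc ∫⁻ ω, F ω ∂μ
        = ∫⁻ ω, ∑' e : (r : ℕ) × (Fin r → ℕ),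
            Set.indicator {ω' | S0 ω' = e.1 ∧ ∀ i : Fin e.1, U i ω' = e.2 i}
              (fun _ => g e.1 e.2) ω ∂μ := lintegral_congr hpt
      _ = ∑' e : (r : ℕ) × (Fin r → ℕ), ∫⁻ ω,
            Set.indicator {ω' | S0 ω' = e.1 ∧ ∀ i : Fin e.1, U i ω' = e.2 i}
              (fun _ => g e.1 e.2) ω ∂μ :=
          lintegral_tsum fun e => ((measurable_const.indicator (hmeasE e)).aemeasurable)
      _ = ∑' e : (r : ℕ) × (Fin r → ℕ), g e.1 e.2 * (Poi e.1 * ∏ i, p (e.2 i)) := by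
          refine tsum_congr fun e => ?_
          rw [lintegral_indicator_const (hmeasE e), hatom e.1 e.2]
  -- identify T with TT
  have hTT : ∀ ω, T ω = TT (fun i : Fin (S0 ω) => U i ω) := by
    intro ω
    rw [hT ω]
    unfold TT
    congr 1
    ext n
    simp only [Set.mem_setOf_eq]
    refine and_congr_right fun _ => ?_
    rw [hX n ω, Finset.card_eq_zero, Finset.filter_eq_empty_iff]
    constructor
    · intro h i
      exact h (Finset.mem_range.mpr i.isLt)
    · intro h s hs
      exact h ⟨s, Finset.mem_range.mp hs⟩
  -- identify M
  have hMeq : ∀ ω, ((M ω : ℕ) : ℝ≥0∞)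
      = (fun r (u : Fin r → ℕ) => ∑ i, ((ffun (u i) (TT u) : ℕ) : ℝ≥0∞))
          (S0 ω) (fun i => U i ω) := by
    intro ω
    have h1 : M ω = ∑ s ∈ Finset.range (S0 ω), ffun (U s ω) (T ω) := hM ω
    have h2 : ∑ s ∈ Finset.range (S0 ω), ffun (U s ω) (T ω)
        = ∑ i : Fin (S0 ω), ffun (U i ω) (TT (fun i : Fin (S0 ω) => U i ω)) := by
      rw [← hTT ω]
      exact (Fin.sum_univ_eq_sum_range (fun s => ffun (U s ω) (T ω)) (S0 ω)).symm
    rw [h1, h2]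
    push_cast
    rfl
  -- identify H
  have hHeq : ∀ k, ENNReal.ofReal (H k) = hhE p k := by
    intro k
    have hsle : (∑ n ∈ Finset.Icc 1 k, p n) ≤ 1 := hp ▸ ENNReal.sum_le_tsum _
    have hIcc : ∀ n ∈ Finset.Icc 1 k, p n = ENNReal.ofReal (π n) := by
      intro n hn
      have : n ≠ 0 := by have := (Finset.mem_Icc.mp hn).1; omega
      simp [hp_def, this]
    have hπn : ∀ n ∈ Finset.Icc 1 k, 0 ≤ π n := fun n hn => hπ n (Finset.mem_Icc.mp hn).1
    have hsum_eq : (∑ n ∈ Finset.Icc 1 k, p n)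
        = ENNReal.ofReal (∑ n ∈ Finset.Icc 1 k, π n) := by
      rw [ENNReal.ofReal_sum_of_nonneg hπn]
      exact Finset.sum_congr rfl hIcc
    have hB1 : (∑ n ∈ Finset.Icc 1 k, π n) ≤ 1 := by
      rw [hsum_eq] at hsle
      exact ENNReal.ofReal_le_one.mp hsle
    have hA : 0 ≤ ∑ n ∈ Finset.Icc 1 k, (n : ℝ) * π n :=
      Finset.sum_nonneg fun n hn => mul_nonneg (Nat.cast_nonneg n) (hπn n hn)
    rw [hH k, hhE]
    rw [ENNReal.ofReal_add hA (mul_nonneg (Nat.cast_nonneg k) (by linarith))]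
    congr 1
    · rw [ENNReal.ofReal_sum_of_nonneg
        (fun n hn => mul_nonneg (Nat.cast_nonneg n) (hπn n hn))]
      refine Finset.sum_congr rfl fun n hn => ?_
      rw [ENNReal.ofReal_mul (Nat.cast_nonneg n), ENNReal.ofReal_natCast, hIcc n hn]
    · rw [ENNReal.ofReal_mul (Nat.cast_nonneg k), ENNReal.ofReal_natCast]
      congr 1
      rw [ENNReal.ofReal_sub _ (Finset.sum_nonneg hπn), ENNReal.ofReal_one, hsum_eq]
  -- assemble
  have hredM := hred (fun r (u : Fin r → ℕ) => ∑ i, ((ffun (u i) (TT u) : ℕ) : ℝ≥0∞))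
    (fun ω => ((M ω : ℕ) : ℝ≥0∞)) hMeq
  have hHT : ∀ ω, ENNReal.ofReal (H (T ω))
      = (fun r (u : Fin r → ℕ) => hhE p (TT u)) (S0 ω) (fun i => U i ω) := by
    intro ω
    rw [hTT ω]
    exact hHeq _
  have hredH := hred (fun r (u : Fin r → ℕ) => hhE p (TT u))
    (fun ω => ENNReal.ofReal (H (T ω))) hHT
  rw [hredM, hredH]
  exact mecke p hp Poi (ENNReal.ofReal v) hQ
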